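/- Let X ⊆ ℝ^d be a nonempty closed convex set with metric projection P_X, and let f_1, …, f_n : ℝ^d → ℝ be differentiable and L-smooth with L > 0; set f = (1/n)Σ_l f_l. Let φ, π ∈ ℝⁿ be positive stochastic vectors, let η > 0, λ ∈ (0, 1], and let x_1, …, x_n, y_1, …, y_n ∈ ℝ^d satisfy the gradient-tracking identity Σ_l y_l = Σ_l ∇f_l(x_l). Define z_i = (1 − λ)x_i + λ P_X(x_i − η y_i) and w_i = (1 − λ)x_i + λ P_X(x_i − η n π_i ∇f(x_i)). Then √(Σ_i φ_i ‖z_i − w_i‖²) ≤ ηλL·√(n / min_i φ_i)·D(x, φ) + ηλ·S(y, π). -/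

import Mathlib

open Finset

/-- Consensus error `D(u, a) = √(Σ_i Σ_j a_i a_j ‖u_i − u_j‖²)`. -/
noncomputable def Derr {n d : ℕ} (a : Fin n → ℝ) (u : Fin n → EuclideanSpace ℝ (Fin d)) : ℝ :=
  Real.sqrt (∑ i, ∑ j, a i * a j * ‖u i - u j‖ ^ 2)

/-- Gradient-tracking error `S(y, a) = √(Σ_i a_i ‖y_i/a_i − Σ_l y_l‖²)`. -/
noncomputable def Serr {n d : ℕ} (a : Fin n → ℝ) (y : Fin n → EuclideanSpace ℝ (Fin d)) : ℝ :=
  Real.sqrt (∑ i, a i * ‖(a i)⁻¹ • y i - (∑ l, y l)‖ ^ 2)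

/-- Minimum entry of a vector over `Fin n`, `n ≠ 0`. -/
noncomputable def fmin {n : ℕ} [NeZero n] (a : Fin n → ℝ) : ℝ :=
  Finset.univ.inf' Finset.univ_nonempty a

set_option maxHeartbeats 1000000


lemma proj_nonexpansive {d : ℕ} (X : Set (EuclideanSpace ℝ (Fin d))) (hXne : X.Nonempty)
    (hXconvex : Convex ℝ X)
    (P : EuclideanSpace ℝ (Fin d) → EuclideanSpace ℝ (Fin d))
    (hPmem : ∀ v, P v ∈ X)
    (hPproj : ∀ v, ∀ u ∈ X, ‖v - P v‖ ≤ ‖v - u‖) :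
    ∀ v₁ v₂, ‖P v₁ - P v₂‖ ≤ ‖v₁ - v₂‖ := by
  haveI : Nonempty X := hXne.to_subtype
  have hvar : ∀ v, ∀ u ∈ X, (inner ℝ (v - P v) (u - P v) : ℝ) ≤ 0 := by
    intro v
    rw [← norm_eq_iInf_iff_real_inner_le_zero hXconvex (hPmem v)]
    refine le_antisymm (le_ciInf fun w => hPproj v w w.2) ?_
    have hb : BddBelow (Set.range fun w : X => ‖v - (w : EuclideanSpace ℝ (Fin d))‖) := by
      refine ⟨0, ?_⟩
      rintro a ⟨w, rfl⟩
      exact norm_nonneg _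
    exact ciInf_le hb ⟨P v, hPmem v⟩
  intro v₁ v₂
  have h1 := hvar v₁ (P v₂) (hPmem v₂)
  have h2 := hvar v₂ (P v₁) (hPmem v₁)
  have h1' : (inner ℝ (P v₁ - v₁) (P v₁ - P v₂) : ℝ) ≤ 0 := by
    rwa [show P v₂ - P v₁ = -(P v₁ - P v₂) from (neg_sub _ _).symm,
      show v₁ - P v₁ = -(P v₁ - v₁) from (neg_sub _ _).symm, inner_neg_neg] at h1
  have hsum := add_nonpos h1' h2
  rw [← inner_add_left,
    show (P v₁ - v₁) + (v₂ - P v₂) = (P v₁ - P v₂) - (v₁ - v₂) by abel,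
    inner_sub_left, real_inner_self_eq_norm_sq] at hsum
  have key : ‖P v₁ - P v₂‖ ^ 2 ≤ (inner ℝ (v₁ - v₂) (P v₁ - P v₂) : ℝ) := by linarith
  rcases eq_or_ne (P v₁) (P v₂) with h | h
  · simp [h]
  · have hpos : 0 < ‖P v₁ - P v₂‖ := by simpa [sub_eq_zero] using h
    nlinarith [real_inner_le_norm (v₁ - v₂) (P v₁ - P v₂), norm_nonneg (v₁ - v₂)]

lemma gradient_avg {n d : ℕ} (f : Fin n → EuclideanSpace ℝ (Fin d) → ℝ)
    (hfdiff : ∀ i, Differentiable ℝ (f i)) (c : ℝ) (p : EuclideanSpace ℝ (Fin d)) :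
    gradient (fun v => c * ∑ l, f l v) p = c • ∑ l, gradient (f l) p := by
  have h : HasGradientAt (fun v => c * ∑ l, f l v) (c • ∑ l, gradient (f l) p) p := by
    rw [hasGradientAt_iff_hasFDerivAt]
    have hl : ∀ l : Fin n, HasFDerivAt (f l)
        (InnerProductSpace.toDual ℝ _ (gradient (f l) p)) p :=
      fun l => (hfdiff l p).hasGradientAt
    have hs : HasFDerivAt (fun v => ∑ l, f l v)
        (∑ l, InnerProductSpace.toDual ℝ _ (gradient (f l) p)) p :=
      HasFDerivAt.fun_sum (fun l _ => hl l)
    have := hs.const_mul c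
    refine this.congr_fderiv ?_
    simp [map_sum]
  exact h.gradient

lemma sqrt_sum_le' {n : ℕ} (φ r s t : Fin n → ℝ) (hφ : ∀ i, 0 ≤ φ i)
    (hr : ∀ i, 0 ≤ r i) (hs : ∀ i, 0 ≤ s i) (ht : ∀ i, 0 ≤ t i)
    (h : ∀ i, r i ≤ s i + t i) :
    Real.sqrt (∑ i, φ i * r i ^ 2)
      ≤ Real.sqrt (∑ i, φ i * s i ^ 2) + Real.sqrt (∑ i, φ i * t i ^ 2) := by
  set A := ∑ i, φ i * s i ^ 2 with hA_def
  set B := ∑ i, φ i * t i ^ 2 with hB_def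
  have hA : 0 ≤ A := sum_nonneg fun i _ => mul_nonneg (hφ i) (sq_nonneg _)
  have hB : 0 ≤ B := sum_nonneg fun i _ => mul_nonneg (hφ i) (sq_nonneg _)
  have hcs : ∑ i, φ i * (s i * t i) ≤ Real.sqrt A * Real.sqrt B := by
    have hsq := sum_sq_le_sum_mul_sum_of_sq_eq_mul Finset.univ
      (r := fun i => φ i * (s i * t i)) (f := fun i => φ i * s i ^ 2)
      (g := fun i => φ i * t i ^ 2)
      (fun i _ => mul_nonneg (hφ i) (sq_nonneg _))
      (fun i _ => mul_nonneg (hφ i) (sq_nonneg _))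
      (fun i _ => by ring)
    have hnn : 0 ≤ ∑ i, φ i * (s i * t i) :=
      sum_nonneg fun i _ => mul_nonneg (hφ i) (mul_nonneg (hs i) (ht i))
    rw [← Real.sqrt_mul hA]
    exact (Real.le_sqrt hnn (mul_nonneg hA hB)).2 hsq
  have hmain : ∑ i, φ i * r i ^ 2 ≤ (Real.sqrt A + Real.sqrt B) ^ 2 := by
    have h1 : ∑ i, φ i * r i ^ 2 ≤ ∑ i, (φ i * s i ^ 2 + 2 * (φ i * (s i * t i)) + φ i * t i ^ 2) := by
      apply Finset.sum_le_sum
      intro i _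
      have hle := h i
      have hsq2 : r i ^ 2 ≤ (s i + t i) ^ 2 := by nlinarith [hr i, hs i, ht i]
      nlinarith [mul_le_mul_of_nonneg_left hsq2 (hφ i)]
    have h2 : ∑ i, (φ i * s i ^ 2 + 2 * (φ i * (s i * t i)) + φ i * t i ^ 2)
        = A + 2 * (∑ i, φ i * (s i * t i)) + B := by
      rw [Finset.sum_add_distrib, Finset.sum_add_distrib, ← Finset.mul_sum]
    rw [h2] at h1
    have h3 : (Real.sqrt A + Real.sqrt B) ^ 2 = A + 2 * (Real.sqrt A * Real.sqrt B) + B := by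
      rw [add_sq, Real.sq_sqrt hA, Real.sq_sqrt hB]; ring
    linarith
  calc Real.sqrt (∑ i, φ i * r i ^ 2) ≤ Real.sqrt ((Real.sqrt A + Real.sqrt B) ^ 2) :=
        Real.sqrt_le_sqrt hmain
    _ = Real.sqrt A + Real.sqrt B := Real.sqrt_sq (by positivity)

/-- Bounding the error from imperfect gradients,
Proposition `imperfect_gradient_error`. With `z_i = (1-λ)x_i + λP(x_i - ηy_i)` and
`w_i = (1-λ)x_i + λP(x_i - ηnπ_i ∇f(x_i))`, under gradient tracking `Σ_l y_l = Σ_l ∇f_l(x_l)`,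
`√(Σ_i φ_i ‖z_i − w_i‖²) ≤ ηλL·√(n/min φ)·D(x, φ) + ηλ·S(y, π)`. -/
theorem imperfect_gradient_error_bound {n d : ℕ} [NeZero n]
    (X : Set (EuclideanSpace ℝ (Fin d))) (hXne : X.Nonempty)
    (hXclosed : IsClosed X) (hXconvex : Convex ℝ X)
    (P : EuclideanSpace ℝ (Fin d) → EuclideanSpace ℝ (Fin d))
    (hPmem : ∀ v, P v ∈ X)
    (hPproj : ∀ v, ∀ u ∈ X, ‖v - P v‖ ≤ ‖v - u‖)
    (f : Fin n → EuclideanSpace ℝ (Fin d) → ℝ)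
    (hfdiff : ∀ i, Differentiable ℝ (f i))
    (L : ℝ) (hL : 0 < L)
    (hsmooth : ∀ i u v, ‖gradient (f i) u - gradient (f i) v‖ ≤ L * ‖u - v‖)
    (φ π : Fin n → ℝ)
    (hφpos : ∀ i, 0 < φ i) (hφsum : ∑ i, φ i = 1)
    (hπpos : ∀ i, 0 < π i) (hπsum : ∑ i, π i = 1)
    (η lam : ℝ) (hη : 0 < η) (hlam0 : 0 < lam) (hlam1 : lam ≤ 1)
    (x y : Fin n → EuclideanSpace ℝ (Fin d))
    (htrack : ∑ l, y l = ∑ l, gradient (f l) (x l))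
    (z w : Fin n → EuclideanSpace ℝ (Fin d))
    (hz : ∀ i, z i = (1 - lam) • x i + lam • P (x i - η • y i))
    (hw : ∀ i, w i = (1 - lam) • x i + lam • P (x i -
      (η * n * π i) • gradient (fun v => (1 / (n : ℝ)) * ∑ l, f l v) (x i))) :
    Real.sqrt (∑ i, φ i * ‖z i - w i‖ ^ 2)
      ≤ η * lam * L * Real.sqrt ((n : ℝ) / fmin φ) * Derr φ x + η * lam * Serr π y := by
  have hn0 : (n : ℝ) ≠ 0 := Nat.cast_ne_zero.2 (NeZero.ne n)
  have hnpos : (0 : ℝ) < n := Nat.cast_pos.2 (Nat.pos_of_ne_zero (NeZero.ne n))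
  have nonexp := proj_nonexpansive X hXne hXconvex P hPmem hPproj
  have hm_le : ∀ j, fmin φ ≤ φ j := fun j => Finset.inf'_le _ (Finset.mem_univ j)
  have hm_pos : 0 < fmin φ := by
    obtain ⟨j0, -, hj0⟩ := Finset.exists_mem_eq_inf' (Finset.univ_nonempty (α := Fin n)) φ
    rw [fmin, hj0]; exact hφpos j0
  have hφ1 : ∀ i, φ i ≤ 1 := by
    intro i; rw [← hφsum]
    exact Finset.single_le_sum (fun j _ => (hφpos j).le) (Finset.mem_univ i)
  have hπ1 : ∀ i, π i ≤ 1 := by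
    intro i; rw [← hπsum]
    exact Finset.single_le_sum (fun j _ => (hπpos j).le) (Finset.mem_univ i)
  set s : Fin n → ℝ := fun i => η * lam * (π i * (L * ∑ l, ‖x l - x i‖)) with hs_def
  set t : Fin n → ℝ := fun i => η * lam * (π i * ‖(π i)⁻¹ • y i - ∑ l, y l‖) with ht_def
  have hsumnn : ∀ i, (0 : ℝ) ≤ ∑ l, ‖x l - x i‖ :=
    fun i => Finset.sum_nonneg fun l _ => norm_nonneg _
  have hs_nn : ∀ i, 0 ≤ s i := fun i =>
    mul_nonneg (mul_nonneg hη.le hlam0.le)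
      (mul_nonneg (hπpos i).le (mul_nonneg hL.le (hsumnn i)))
  have ht_nn : ∀ i, 0 ≤ t i := fun i =>
    mul_nonneg (mul_nonneg hη.le hlam0.le) (mul_nonneg (hπpos i).le (norm_nonneg _))
  have hpt : ∀ i, ‖z i - w i‖ ≤ s i + t i := by
    intro i
    have hgrad : gradient (fun v => (1 / (n : ℝ)) * ∑ l, f l v) (x i)
        = (1 / (n : ℝ)) • ∑ l, gradient (f l) (x i) := gradient_avg f hfdiff _ _
    set V : EuclideanSpace ℝ (Fin d) := ∑ l, gradient (f l) (x i) with hV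
    have hco : (η * (n : ℝ) * π i) * (1 / (n : ℝ)) = η * π i := by field_simp
    have hzw : z i - w i = lam • (P (x i - η • y i) - P (x i - (η * π i) • V)) := by
      rw [hz i, hw i, hgrad, smul_smul, hco, smul_sub]
      abel
    have hnorm1 : ‖z i - w i‖ ≤ lam * ‖(x i - η • y i) - (x i - (η * π i) • V)‖ := by
      rw [hzw, norm_smul, Real.norm_eq_abs, abs_of_pos hlam0]
      exact mul_le_mul_of_nonneg_left (nonexp _ _) hlam0.le
    have hdiff : (x i - η • y i) - (x i - (η * π i) • V) = η • ((π i) • V - y i) := by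
      rw [smul_sub, mul_smul]; abel
    have hdecomp : y i - (π i) • V =
        (π i) • ((π i)⁻¹ • y i - ∑ l, y l) + (π i) • ((∑ l, gradient (f l) (x l)) - V) := by
      rw [smul_sub, smul_sub, smul_inv_smul₀ (hπpos i).ne', ← htrack]
      abel
    have hsumbound : ‖(∑ l, gradient (f l) (x l)) - V‖ ≤ L * ∑ l, ‖x l - x i‖ := by
      rw [hV, ← Finset.sum_sub_distrib]
      calc ‖∑ l, (gradient (f l) (x l) - gradient (f l) (x i))‖
          ≤ ∑ l, ‖gradient (f l) (x l) - gradient (f l) (x i)‖ := norm_sum_le _ _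
        _ ≤ ∑ l, L * ‖x l - x i‖ := Finset.sum_le_sum fun l _ => hsmooth l _ _
        _ = L * ∑ l, ‖x l - x i‖ := (Finset.mul_sum _ _ _).symm
    have hyb : ‖y i - (π i) • V‖
        ≤ π i * ‖(π i)⁻¹ • y i - ∑ l, y l‖ + π i * (L * ∑ l, ‖x l - x i‖) := by
      rw [hdecomp]
      refine (norm_add_le _ _).trans ?_
      rw [norm_smul, norm_smul, Real.norm_eq_abs, abs_of_pos (hπpos i)]
      exact add_le_add le_rfl (mul_le_mul_of_nonneg_left hsumbound (hπpos i).le)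
    calc ‖z i - w i‖ ≤ lam * ‖η • ((π i) • V - y i)‖ := by rw [← hdiff]; exact hnorm1
      _ = lam * (η * ‖y i - (π i) • V‖) := by
          rw [norm_smul, Real.norm_eq_abs, abs_of_pos hη, norm_sub_rev]
      _ ≤ lam * (η * (π i * ‖(π i)⁻¹ • y i - ∑ l, y l‖ + π i * (L * ∑ l, ‖x l - x i‖))) :=
          mul_le_mul_of_nonneg_left (mul_le_mul_of_nonneg_left hyb hη.le) hlam0.le
      _ = s i + t i := by simp only [hs_def, ht_def]; ring
  have key := sqrt_sum_le' φ (fun i => ‖z i - w i‖) s t (fun i => (hφpos i).le)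
      (fun i => norm_nonneg _) hs_nn ht_nn hpt
  refine key.trans (add_le_add ?_ ?_)
  · -- first term
    have hb : ∑ i, φ i * s i ^ 2
        ≤ (η * lam * L) ^ 2 * (((n : ℝ) / fmin φ) * ∑ i, ∑ j, φ i * φ j * ‖x i - x j‖ ^ 2) := by
      rw [Finset.mul_sum, Finset.mul_sum]
      refine Finset.sum_le_sum fun i _ => ?_
      have cheb : (∑ l, ‖x l - x i‖) ^ 2 ≤ (n : ℝ) * ∑ l, ‖x l - x i‖ ^ 2 := by
        have h := sq_sum_le_card_mul_sum_sq (s := Finset.univ) (f := fun l => ‖x l - x i‖)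
        simpa using h
      have step1 : φ i * s i ^ 2 ≤ (η * lam * L) ^ 2 * (φ i * (∑ l, ‖x l - x i‖) ^ 2) := by
        have expand : φ i * s i ^ 2
            = (η * lam * L) ^ 2 * (π i ^ 2 * (φ i * (∑ l, ‖x l - x i‖) ^ 2)) := by
          simp only [hs_def]; ring
        rw [expand]
        have hπsq : π i ^ 2 ≤ 1 := by nlinarith [hπ1 i, (hπpos i).le]
        have hnn : 0 ≤ φ i * (∑ l, ‖x l - x i‖) ^ 2 := mul_nonneg (hφpos i).le (sq_nonneg _)
        exact mul_le_mul_of_nonneg_left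
          (by nlinarith [mul_le_mul_of_nonneg_right hπsq hnn]) (sq_nonneg (η * lam * L))
      have step2 : φ i * (∑ l, ‖x l - x i‖) ^ 2 ≤ (n : ℝ) * (φ i * ∑ l, ‖x l - x i‖ ^ 2) := by
        nlinarith [mul_le_mul_of_nonneg_left cheb (hφpos i).le]
      have step3 : (n : ℝ) * (φ i * ∑ l, ‖x l - x i‖ ^ 2)
          ≤ ((n : ℝ) / fmin φ) * ∑ j, φ i * φ j * ‖x i - x j‖ ^ 2 := by
        rw [Finset.mul_sum, Finset.mul_sum, Finset.mul_sum]
        refine Finset.sum_le_sum fun l _ => ?_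
        rw [norm_sub_rev (x i)]
        have hnl : (n : ℝ) ≤ (n : ℝ) / fmin φ * φ l := by
          rw [div_mul_eq_mul_div, le_div_iff₀ hm_pos]
          nlinarith [hm_le l, hnpos]
        nlinarith [mul_nonneg (hφpos i).le (sq_nonneg ‖x l - x i‖), hnpos, hm_pos,
          mul_le_mul_of_nonneg_right hnl (mul_nonneg (hφpos i).le (sq_nonneg ‖x l - x i‖))]
      calc φ i * s i ^ 2 ≤ (η * lam * L) ^ 2 * (φ i * (∑ l, ‖x l - x i‖) ^ 2) := step1
        _ ≤ (η * lam * L) ^ 2 * (((n : ℝ) / fmin φ) * ∑ j, φ i * φ j * ‖x i - x j‖ ^ 2) := by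
            refine mul_le_mul_of_nonneg_left (step2.trans step3) (sq_nonneg _)
    calc Real.sqrt (∑ i, φ i * s i ^ 2)
        ≤ Real.sqrt ((η * lam * L) ^ 2
            * (((n : ℝ) / fmin φ) * ∑ i, ∑ j, φ i * φ j * ‖x i - x j‖ ^ 2)) :=
          Real.sqrt_le_sqrt hb
      _ = η * lam * L * Real.sqrt ((n : ℝ) / fmin φ) * Derr φ x := by
          rw [Real.sqrt_mul (sq_nonneg _),
            Real.sqrt_sq (mul_nonneg (mul_nonneg hη.le hlam0.le) hL.le),
            Real.sqrt_mul (div_nonneg hnpos.le hm_pos.le), Derr]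
          ring
  · -- second term
    have hb : ∑ i, φ i * t i ^ 2
        ≤ (η * lam) ^ 2 * ∑ i, π i * ‖(π i)⁻¹ • y i - ∑ l, y l‖ ^ 2 := by
      rw [Finset.mul_sum]
      refine Finset.sum_le_sum fun i _ => ?_
      have hc : (0 : ℝ) ≤ ‖(π i)⁻¹ • y i - ∑ l, y l‖ ^ 2 := sq_nonneg _
      have hfp : φ i * π i ≤ 1 := by nlinarith [hφ1 i, hπ1 i, (hφpos i).le, (hπpos i).le]
      have expand : φ i * t i ^ 2
          = (η * lam) ^ 2 * ((φ i * π i) * (π i * ‖(π i)⁻¹ • y i - ∑ l, y l‖ ^ 2)) := by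
        simp only [ht_def]; ring
      rw [expand]
      have hle : (φ i * π i) * (π i * ‖(π i)⁻¹ • y i - ∑ l, y l‖ ^ 2)
          ≤ π i * ‖(π i)⁻¹ • y i - ∑ l, y l‖ ^ 2 := by
        nlinarith [mul_nonneg (hπpos i).le hc, hfp]
      exact mul_le_mul_of_nonneg_left hle (sq_nonneg _)
    calc Real.sqrt (∑ i, φ i * t i ^ 2)
        ≤ Real.sqrt ((η * lam) ^ 2 * ∑ i, π i * ‖(π i)⁻¹ • y i - ∑ l, y l‖ ^ 2) :=
          Real.sqrt_le_sqrt hb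
      _ = η * lam * Serr π y := by
          rw [Real.sqrt_mul (sq_nonneg _), Real.sqrt_sq (mul_nonneg hη.le hlam0.le), Serr]
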